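/- Let q be odd, G = SL_2(F_q), and B = {(a b; 0 a^{-1}) : a ∈ F_q^×, b ∈ F_q}, U = {(1 b; 0 1) : b ∈ F_q}, and T = {(a 0; 0 a^{-1}) : a ∈ F_q^×}. For g, h ∈ GL_2(F_q), write H^g = g^{-1}Hg. Then: (1) if #(B^g ∩ U^h) > 1 then U^h ⊆ B^g; (2) if B^g ≠ B^h then B^g ∩ B^h is conjugate to T in GL_2(F_q); (3) if B^g, B^h, B^k are pairwise distinct then B^g ∩ B^h ∩ B^k = {±1}. -/

import Mathlib

open Matrix

variable {Fq : Type*} [Field Fq] [Fintype Fq]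

/-- The Borel subgroup `B` of `SL₂(Fq)`, as a set of matrices. -/
def Bset (Fq : Type*) [Field Fq] : Set (Matrix (Fin 2) (Fin 2) Fq) :=
  {M | ∃ (a : Fqˣ) (b : Fq), M = !![(a : Fq), b; 0, ((a⁻¹ : Fqˣ) : Fq)]}

/-- The unipotent subgroup `U` of `SL₂(Fq)`, as a set of matrices. -/
def Uset (Fq : Type*) [Field Fq] : Set (Matrix (Fin 2) (Fin 2) Fq) :=
  {M | ∃ b : Fq, M = !![1, b; 0, 1]}

/-- The split torus `T` of `SL₂(Fq)`, as a set of matrices. -/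
def Tset (Fq : Type*) [Field Fq] : Set (Matrix (Fin 2) (Fin 2) Fq) :=
  {M | ∃ a : Fqˣ, M = !![(a : Fq), 0; 0, ((a⁻¹ : Fqˣ) : Fq)]}

/-- Conjugation `H^g = g⁻¹ H g` of a set of matrices by an element of `GL₂(Fq)`. -/
def conjSet (g : GL (Fin 2) Fq) (H : Set (Matrix (Fin 2) (Fin 2) Fq)) :
    Set (Matrix (Fin 2) (Fin 2) Fq) :=
  (fun M => ((g⁻¹ : GL (Fin 2) Fq) : Matrix (Fin 2) (Fin 2) Fq) * M *
    (g : Matrix (Fin 2) (Fin 2) Fq)) '' H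

namespace BorelAux

variable {Fq : Type*} [Field Fq]
set_option linter.unusedSectionVars false

lemma mulVec_expand (M : Matrix (Fin 2) (Fin 2) Fq) (v : Fin 2 → Fq) :
    M.mulVec v = ![M 0 0 * v 0 + M 0 1 * v 1, M 1 0 * v 0 + M 1 1 * v 1] := by
  funext i
  fin_cases i <;> simp [Matrix.mulVec, dotProduct, Fin.sum_univ_two]

lemma vec2_eq {v w : Fin 2 → Fq} (h0 : v 0 = w 0) (h1 : v 1 = w 1) : v = w := by
  funext i; fin_cases i <;> assumption

lemma mem_Bset_iff (M : Matrix (Fin 2) (Fin 2) Fq) :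
    M ∈ Bset Fq ↔ M.det = 1 ∧ ∃ c : Fq, M.mulVec ![1, 0] = c • ![1, 0] := by
  constructor
  · rintro ⟨a, b, rfl⟩
    refine ⟨by simp [Matrix.det_fin_two], (a : Fq), ?_⟩
    rw [mulVec_expand]
    apply vec2_eq <;> simp
  · rintro ⟨hdet, c, hc⟩
    rw [mulVec_expand] at hc
    have h0 : M 0 0 = c := by have := congrFun hc 0; simpa using this
    have h1 : M 1 0 = 0 := by have := congrFun hc 1; simpa using this
    rw [Matrix.det_fin_two, h1, mul_zero, sub_zero] at hdet
    refine ⟨⟨M 0 0, M 1 1, hdet, by rw [mul_comm]; exact hdet⟩, M 0 1, ?_⟩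
    conv_lhs => rw [Matrix.eta_fin_two M]
    rw [h1]
    rfl

lemma mem_Tset_iff (M : Matrix (Fin 2) (Fin 2) Fq) :
    M ∈ Tset Fq ↔ M.det = 1 ∧ (∃ c : Fq, M.mulVec ![1, 0] = c • ![1, 0]) ∧
      (∃ d : Fq, M.mulVec ![0, 1] = d • ![0, 1]) := by
  constructor
  · rintro ⟨a, rfl⟩
    refine ⟨by simp [Matrix.det_fin_two], ⟨(a : Fq), ?_⟩, ⟨((a⁻¹ : Fqˣ) : Fq), ?_⟩⟩ <;>
      (rw [mulVec_expand]; apply vec2_eq <;> simp)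
  · rintro ⟨hdet, ⟨c, hc⟩, ⟨d, hd⟩⟩
    rw [mulVec_expand] at hc hd
    have h00 : M 0 0 = c := by have := congrFun hc 0; simpa using this
    have h10 : M 1 0 = 0 := by have := congrFun hc 1; simpa using this
    have h01 : M 0 1 = 0 := by have := congrFun hd 0; simpa using this
    have h11 : M 1 1 = d := by have := congrFun hd 1; simpa using this
    rw [Matrix.det_fin_two, h10, mul_zero, sub_zero] at hdet
    refine ⟨⟨M 0 0, M 1 1, hdet, by rw [mul_comm]; exact hdet⟩, ?_⟩
    conv_lhs => rw [Matrix.eta_fin_two M]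
    rw [h10, h01]
    rfl

/-- the line vector of `g` : `g⁻¹ e₁`. -/
def vec1 (g : GL (Fin 2) Fq) : Fin 2 → Fq :=
  ((g⁻¹ : GL (Fin 2) Fq) : Matrix (Fin 2) (Fin 2) Fq).mulVec ![1, 0]

def vec2 (g : GL (Fin 2) Fq) : Fin 2 → Fq :=
  ((g⁻¹ : GL (Fin 2) Fq) : Matrix (Fin 2) (Fin 2) Fq).mulVec ![0, 1]

lemma hGA (g : GL (Fin 2) Fq) :
    (g : Matrix (Fin 2) (Fin 2) Fq) * ((g⁻¹ : GL (Fin 2) Fq) : Matrix (Fin 2) (Fin 2) Fq) = 1 := by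
  rw [← Units.val_mul, mul_inv_cancel, Units.val_one]

lemma hAG (g : GL (Fin 2) Fq) :
    ((g⁻¹ : GL (Fin 2) Fq) : Matrix (Fin 2) (Fin 2) Fq) * (g : Matrix (Fin 2) (Fin 2) Fq) = 1 := by
  rw [← Units.val_mul, inv_mul_cancel, Units.val_one]

lemma mem_conj_iff (g : GL (Fin 2) Fq) (H : Set (Matrix (Fin 2) (Fin 2) Fq))
    (M : Matrix (Fin 2) (Fin 2) Fq) :
    M ∈ conjSet g H ↔ (g : Matrix (Fin 2) (Fin 2) Fq) * M *
      ((g⁻¹ : GL (Fin 2) Fq) : Matrix (Fin 2) (Fin 2) Fq) ∈ H := by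
  set A : Matrix (Fin 2) (Fin 2) Fq := ((g⁻¹ : GL (Fin 2) Fq) : Matrix (Fin 2) (Fin 2) Fq) with hA
  set G : Matrix (Fin 2) (Fin 2) Fq := (g : Matrix (Fin 2) (Fin 2) Fq) with hG
  have kGA : G * A = 1 := hGA g
  have kAG : A * G = 1 := hAG g
  constructor
  · rintro ⟨N, hN, rfl⟩
    have : G * (A * N * G) * A = N := by
      rw [show G * (A * N * G) * A = (G * A) * N * (G * A) by noncomm_ring, kGA, one_mul, mul_one]
    rwa [this]
  · intro hN
    refine ⟨G * M * A, hN, ?_⟩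
    show A * (G * M * A) * G = M
    rw [show A * (G * M * A) * G = (A * G) * M * (A * G) by noncomm_ring, kAG, one_mul, mul_one]

lemma conj_line_iff (g : GL (Fin 2) Fq) (M : Matrix (Fin 2) (Fin 2) Fq)
    (v : Fin 2 → Fq) (c : Fq) :
    ((g : Matrix (Fin 2) (Fin 2) Fq) * M *
        ((g⁻¹ : GL (Fin 2) Fq) : Matrix (Fin 2) (Fin 2) Fq)).mulVec v = c • v ↔
      M.mulVec (((g⁻¹ : GL (Fin 2) Fq) : Matrix (Fin 2) (Fin 2) Fq).mulVec v) =
        c • (((g⁻¹ : GL (Fin 2) Fq) : Matrix (Fin 2) (Fin 2) Fq).mulVec v) := by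
  set A : Matrix (Fin 2) (Fin 2) Fq := ((g⁻¹ : GL (Fin 2) Fq) : Matrix (Fin 2) (Fin 2) Fq) with hA
  set G : Matrix (Fin 2) (Fin 2) Fq := (g : Matrix (Fin 2) (Fin 2) Fq) with hG
  have kGA : G * A = 1 := hGA g
  have kAG : A * G = 1 := hAG g
  constructor
  · intro h
    have := congrArg (A.mulVec ·) h
    simp only [Matrix.mulVec_mulVec, Matrix.mulVec_smul] at this ⊢
    rwa [show A * (G * M * A) = M * A by rw [← mul_assoc, ← mul_assoc, kAG, one_mul]] at this
  · intro h
    have := congrArg (G.mulVec ·) h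
    simp only [Matrix.mulVec_mulVec, Matrix.mulVec_smul] at this ⊢
    rwa [show G * (M * A) = G * M * A by rw [mul_assoc], kGA, Matrix.one_mulVec] at this

lemma det_conj (g : GL (Fin 2) Fq) (M : Matrix (Fin 2) (Fin 2) Fq) :
    ((g : Matrix (Fin 2) (Fin 2) Fq) * M *
      ((g⁻¹ : GL (Fin 2) Fq) : Matrix (Fin 2) (Fin 2) Fq)).det = M.det := by
  have h1 : (g : Matrix (Fin 2) (Fin 2) Fq).det *
      ((g⁻¹ : GL (Fin 2) Fq) : Matrix (Fin 2) (Fin 2) Fq).det = 1 := by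
    rw [← Matrix.det_mul, hGA, Matrix.det_one]
  rw [Matrix.det_mul, Matrix.det_mul]
  linear_combination M.det * h1

lemma mem_conjB_iff (g : GL (Fin 2) Fq) (M : Matrix (Fin 2) (Fin 2) Fq) :
    M ∈ conjSet g (Bset Fq) ↔ M.det = 1 ∧ ∃ c : Fq, M.mulVec (vec1 g) = c • vec1 g := by
  rw [mem_conj_iff, mem_Bset_iff, det_conj]
  exact and_congr_right fun _ => exists_congr fun c => conj_line_iff g M ![1, 0] c

lemma mem_conjT_iff (g : GL (Fin 2) Fq) (M : Matrix (Fin 2) (Fin 2) Fq) :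
    M ∈ conjSet g (Tset Fq) ↔ M.det = 1 ∧ (∃ c : Fq, M.mulVec (vec1 g) = c • vec1 g) ∧
      (∃ d : Fq, M.mulVec (vec2 g) = d • vec2 g) := by
  rw [mem_conj_iff, mem_Tset_iff, det_conj]
  exact and_congr_right fun _ => and_congr
    (exists_congr fun c => conj_line_iff g M ![1, 0] c)
    (exists_congr fun d => conj_line_iff g M ![0, 1] d)

lemma conjU_elem {g : GL (Fin 2) Fq} {M : Matrix (Fin 2) (Fin 2) Fq}
    (hM : M ∈ conjSet g (Uset Fq)) :
    M.det = 1 ∧ M.mulVec (vec1 g) = vec1 g ∧ (M - 1) * (M - 1) = 0 := by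
  rw [mem_conj_iff] at hM
  obtain ⟨b, hb⟩ := hM
  set A : Matrix (Fin 2) (Fin 2) Fq := ((g⁻¹ : GL (Fin 2) Fq) : Matrix (Fin 2) (Fin 2) Fq) with hA
  set G : Matrix (Fin 2) (Fin 2) Fq := (g : Matrix (Fin 2) (Fin 2) Fq) with hG
  have kGA : G * A = 1 := hGA g
  have kAG : A * G = 1 := hAG g
  -- express M via u
  have hMval : M = A * !![1, b; 0, 1] * G := by
    have := congrArg (fun X => A * X * G) hb
    rwa [show A * (G * M * A) * G = (A * G) * M * (A * G) by noncomm_ring, kAG, one_mul,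
      mul_one] at this
  refine ⟨?_, ?_, ?_⟩
  · have h1 : G.det * A.det = 1 := by rw [← Matrix.det_mul, kGA, Matrix.det_one]
    rw [hMval, Matrix.det_mul, Matrix.det_mul]
    have hu : (!![1, b; 0, 1] : Matrix (Fin 2) (Fin 2) Fq).det = 1 := by
      simp [Matrix.det_fin_two_of]
    rw [hu]
    linear_combination h1
  · have hu : (!![1, b; 0, 1] : Matrix (Fin 2) (Fin 2) Fq).mulVec ![1, 0] = ![1, 0] := by
      rw [mulVec_expand]; apply vec2_eq <;> simp
    rw [hMval, vec1, ← hA, Matrix.mulVec_mulVec, show A * !![1, b; 0, 1] * G * A =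
      A * !![1, b; 0, 1] by rw [mul_assoc, kGA, mul_one], ← Matrix.mulVec_mulVec, hu]
  · have hsq : (!![1, b; 0, 1] - 1 : Matrix (Fin 2) (Fin 2) Fq) *
        (!![1, b; 0, 1] - 1) = 0 := by
      ext i j
      fin_cases i <;> fin_cases j <;>
        simp [Matrix.mul_apply, Fin.sum_univ_two, Matrix.one_apply]
    have hM1 : M - 1 = A * (!![1, b; 0, 1] - 1) * G := by
      rw [hMval, Matrix.mul_sub, Matrix.sub_mul, mul_one, kAG]
    rw [hM1, show A * (!![1, b; 0, 1] - 1) * G * (A * (!![1, b; 0, 1] - 1) * G) =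
      A * ((!![1, b; 0, 1] - 1) * (G * A) * (!![1, b; 0, 1] - 1)) * G by noncomm_ring,
      kGA, mul_one, hsq, Matrix.mul_zero, Matrix.zero_mul]

def Dt (v w : Fin 2 → Fq) : Fq := v 0 * w 1 - v 1 * w 0

lemma vec_ne_zero_iff {v : Fin 2 → Fq} : v ≠ 0 ↔ v 0 ≠ 0 ∨ v 1 ≠ 0 := by
  constructor
  · intro h
    by_contra hc
    push_neg at hc
    exact h (vec2_eq (by simpa using hc.1) (by simpa using hc.2))
  · rintro (h | h) rfl <;> simp at h

lemma prop_of_Dt_zero {v w : Fin 2 → Fq} (hv : v ≠ 0) (h : Dt v w = 0) :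
    ∃ t : Fq, w = t • v := by
  simp only [Dt] at h
  rcases vec_ne_zero_iff.mp hv with h0 | h1
  · refine ⟨w 0 / v 0, vec2_eq ?_ ?_⟩ <;>
      simp only [Pi.smul_apply, smul_eq_mul] <;> field_simp <;> linear_combination h
  · refine ⟨w 1 / v 1, vec2_eq ?_ ?_⟩ <;>
      simp only [Pi.smul_apply, smul_eq_mul] <;> field_simp <;> linear_combination -h

lemma decomp {v w : Fin 2 → Fq} (h : Dt v w ≠ 0) (u : Fin 2 → Fq) :
    ∃ α β : Fq, u = α • v + β • w := by
  simp only [Dt] at h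
  refine ⟨(u 0 * w 1 - u 1 * w 0) / (v 0 * w 1 - v 1 * w 0),
    (v 0 * u 1 - v 1 * u 0) / (v 0 * w 1 - v 1 * w 0), vec2_eq ?_ ?_⟩ <;>
    simp only [Pi.add_apply, Pi.smul_apply, smul_eq_mul] <;>
    rw [div_mul_eq_mul_div, div_mul_eq_mul_div, ← add_div, eq_div_iff h] <;> ring

lemma indep_zero {v w : Fin 2 → Fq} (h : Dt v w ≠ 0) {α β : Fq}
    (hz : α • v + β • w = 0) : α = 0 ∧ β = 0 := by
  simp only [Dt] at h
  have h0 := congrFun hz 0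
  have h1 := congrFun hz 1
  simp only [Pi.add_apply, Pi.smul_apply, smul_eq_mul, Pi.zero_apply] at h0 h1
  constructor
  · have : α * (v 0 * w 1 - v 1 * w 0) = 0 := by linear_combination w 1 * h0 - w 0 * h1
    rcases mul_eq_zero.mp this with h' | h'
    · exact h'
    · exact absurd h' h
  · have : β * (v 0 * w 1 - v 1 * w 0) = 0 := by linear_combination v 0 * h1 - v 1 * h0
    rcases mul_eq_zero.mp this with h' | h'
    · exact h'
    · exact absurd h' h

lemma vec1_ne_zero (g : GL (Fin 2) Fq) : vec1 g ≠ 0 := by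
  intro h
  have h2 : (g : Matrix (Fin 2) (Fin 2) Fq).mulVec (vec1 g) =
      (g : Matrix (Fin 2) (Fin 2) Fq).mulVec 0 := by rw [h]
  rw [Matrix.mulVec_zero, vec1, Matrix.mulVec_mulVec, hGA, Matrix.one_mulVec] at h2
  have := congrFun h2 0
  simp at this

lemma vec2_ne_zero (g : GL (Fin 2) Fq) : vec2 g ≠ 0 := by
  intro h
  have h2 : (g : Matrix (Fin 2) (Fin 2) Fq).mulVec (vec2 g) =
      (g : Matrix (Fin 2) (Fin 2) Fq).mulVec 0 := by rw [h]
  rw [Matrix.mulVec_zero, vec2, Matrix.mulVec_mulVec, hGA, Matrix.one_mulVec] at h2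
  have := congrFun h2 1
  simp at this

lemma conjB_eq_of_prop {g h : GL (Fin 2) Fq} (t : Fq) (ht : vec1 h = t • vec1 g) :
    conjSet g (Bset Fq) = conjSet h (Bset Fq) := by
  have htne : t ≠ 0 := by
    rintro rfl
    exact vec1_ne_zero h (by simpa using ht)
  have hgv : vec1 g = t⁻¹ • vec1 h := by
    rw [ht, smul_smul, inv_mul_cancel₀ htne, one_smul]
  ext M
  rw [mem_conjB_iff, mem_conjB_iff]
  refine and_congr_right fun _ => ⟨fun ⟨c, hc⟩ => ⟨c, ?_⟩, fun ⟨c, hc⟩ => ⟨c, ?_⟩⟩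
  · rw [ht, Matrix.mulVec_smul, hc, smul_comm]
  · rw [hgv, Matrix.mulVec_smul, hc, smul_comm]

lemma Dt_ne_of_Bne {g h : GL (Fin 2) Fq}
    (hne : conjSet g (Bset Fq) ≠ conjSet h (Bset Fq)) :
    Dt (vec1 g) (vec1 h) ≠ 0 := by
  intro h0
  obtain ⟨t, ht⟩ := prop_of_Dt_zero (vec1_ne_zero g) h0
  exact hne (conjB_eq_of_prop t ht)

/-- if `M` fixes two independent lines each by scalar `c`, then `M = c • 1` entrywise. -/
lemma scalar_of_two_lines {v w : Fin 2 → Fq} (hD : Dt v w ≠ 0)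
    {M : Matrix (Fin 2) (Fin 2) Fq} {c : Fq}
    (hv : M.mulVec v = c • v) (hw : M.mulVec w = c • w) :
    M = !![c, 0; 0, c] := by
  have fix_all : ∀ u : Fin 2 → Fq, M.mulVec u = c • u := by
    intro u
    obtain ⟨α, β, rfl⟩ := decomp hD u
    rw [Matrix.mulVec_add, Matrix.mulVec_smul, Matrix.mulVec_smul, hv, hw, smul_add,
      smul_comm α c, smul_comm β c]
  have he1 := fix_all ![1, 0]
  have he2 := fix_all ![0, 1]
  rw [mulVec_expand] at he1 he2
  have e00 : M 0 0 = c := by have := congrFun he1 0; simpa using this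
  have e10 : M 1 0 = 0 := by have := congrFun he1 1; simpa using this
  have e01 : M 0 1 = 0 := by have := congrFun he2 0; simpa using this
  have e11 : M 1 1 = c := by have := congrFun he2 1; simpa using this
  rw [Matrix.eta_fin_two M, e00, e10, e01, e11]

lemma Uset_subset_Bset : Uset Fq ⊆ Bset Fq := by
  rintro M ⟨b, rfl⟩
  exact ⟨1, b, by norm_num⟩

lemma one_mem_conjB (g : GL (Fin 2) Fq) : (1 : Matrix (Fin 2) (Fin 2) Fq) ∈ conjSet g (Bset Fq) := by
  rw [mem_conjB_iff]
  exact ⟨Matrix.det_one, 1, by rw [Matrix.one_mulVec, one_smul]⟩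

lemma neg_one_mem_conjB (g : GL (Fin 2) Fq) :
    (-1 : Matrix (Fin 2) (Fin 2) Fq) ∈ conjSet g (Bset Fq) := by
  rw [mem_conjB_iff]
  refine ⟨by simp [Matrix.det_neg], -1, ?_⟩
  rw [Matrix.neg_mulVec, Matrix.one_mulVec, neg_smul, one_smul]

end BorelAux

open BorelAux

/-- For `q` odd: (1) if `B^g ∩ U^h` has more than one element then
`U^h ⊆ B^g`; (2) if `B^g ≠ B^h` then `B^g ∩ B^h` is a `GL₂(Fq)`-conjugate of `T`;
(3) if `B^g, B^h, B^k` are pairwise distinct then `B^g ∩ B^h ∩ B^k = {±1}`. -/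
theorem borel_intersections (hq : Odd (Fintype.card Fq)) :
    (∀ g h : GL (Fin 2) Fq,
      1 < Nat.card ↥(conjSet g (Bset Fq) ∩ conjSet h (Uset Fq)) →
        conjSet h (Uset Fq) ⊆ conjSet g (Bset Fq)) ∧
    (∀ g h : GL (Fin 2) Fq, conjSet g (Bset Fq) ≠ conjSet h (Bset Fq) →
      ∃ k : GL (Fin 2) Fq,
        conjSet g (Bset Fq) ∩ conjSet h (Bset Fq) = conjSet k (Tset Fq)) ∧
    (∀ g h k : GL (Fin 2) Fq,
      conjSet g (Bset Fq) ≠ conjSet h (Bset Fq) →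
      conjSet g (Bset Fq) ≠ conjSet k (Bset Fq) →
      conjSet h (Bset Fq) ≠ conjSet k (Bset Fq) →
        conjSet g (Bset Fq) ∩ conjSet h (Bset Fq) ∩ conjSet k (Bset Fq) =
          {(1 : Matrix (Fin 2) (Fin 2) Fq), (-1 : Matrix (Fin 2) (Fin 2) Fq)}) := by
  refine ⟨?_, ?_, ?_⟩
  · -- Part 1
    intro g h hcard
    have hnt : ∃ M M' : Matrix (Fin 2) (Fin 2) Fq,
        M ∈ conjSet g (Bset Fq) ∩ conjSet h (Uset Fq) ∧
        M' ∈ conjSet g (Bset Fq) ∩ conjSet h (Uset Fq) ∧ M ≠ M' := by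
      have hfin : Finite ↥(conjSet g (Bset Fq) ∩ conjSet h (Uset Fq)) :=
        Nat.finite_of_card_ne_zero (by omega)
      cases nonempty_fintype ↥(conjSet g (Bset Fq) ∩ conjSet h (Uset Fq))
      rw [Nat.card_eq_fintype_card] at hcard
      have := Fintype.one_lt_card_iff_nontrivial.mp hcard
      obtain ⟨⟨M, hM⟩, ⟨M', hM'⟩, hne⟩ := this
      exact ⟨M, M', hM, hM', fun h2 => hne (Subtype.ext h2)⟩
    obtain ⟨M, M', hM, hM', hMM⟩ := hnt
    have key : ∃ N, N ∈ conjSet g (Bset Fq) ∩ conjSet h (Uset Fq) ∧ N ≠ 1 := by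
      by_cases h1 : M = 1
      · exact ⟨M', hM', fun h2 => hMM (by rw [h1, h2])⟩
      · exact ⟨M, hM, h1⟩
    obtain ⟨N, ⟨hNB, hNU⟩, hN1⟩ := key
    obtain ⟨hdet, c, hc⟩ := (mem_conjB_iff g N).mp hNB
    obtain ⟨-, hfix, hnil⟩ := conjU_elem hNU
    have hprop : ∃ t : Fq, vec1 g = t • vec1 h := by
      by_contra hcon
      have hD : Dt (vec1 h) (vec1 g) ≠ 0 := fun h0 =>
        hcon (prop_of_Dt_zero (vec1_ne_zero h) h0)
      have h2 : ((c - 1) * (c - 1)) • vec1 g = 0 := by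
        have e1 : (N - 1).mulVec (vec1 g) = (c - 1) • vec1 g := by
          rw [Matrix.sub_mulVec, Matrix.one_mulVec, hc, sub_smul, one_smul]
        have e2 : ((N - 1) * (N - 1)).mulVec (vec1 g) = ((c - 1) * (c - 1)) • vec1 g := by
          rw [← Matrix.mulVec_mulVec, e1, Matrix.mulVec_smul, e1, smul_smul]
        rw [← e2, hnil, Matrix.zero_mulVec]
      have hc1 : c = 1 := by
        rcases smul_eq_zero.mp h2 with h' | h'
        · exact sub_eq_zero.mp (mul_self_eq_zero.mp h')
        · exact absurd h' (vec1_ne_zero g)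
      rw [hc1, one_smul] at hc
      have hNid : N = !![(1 : Fq), 0; 0, 1] :=
        scalar_of_two_lines hD (by rw [hfix, one_smul]) (by rw [hc, one_smul])
      exact hN1 (by rw [hNid, ← Matrix.one_fin_two])
    obtain ⟨t, ht⟩ := hprop
    have hBB : conjSet h (Bset Fq) = conjSet g (Bset Fq) := conjB_eq_of_prop t ht
    intro X hX
    rw [← hBB]
    obtain ⟨u, hu, rfl⟩ := hX
    exact ⟨u, Uset_subset_Bset hu, rfl⟩
  · -- Part 2
    intro g h hne
    have hD := Dt_ne_of_Bne hne
    set Q : Matrix (Fin 2) (Fin 2) Fq :=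
      !![vec1 g 0, vec1 h 0; vec1 g 1, vec1 h 1] with hQ
    have hdetQ : Q.det ≠ 0 := by
      rw [hQ, Matrix.det_fin_two_of]
      intro hz
      apply hD
      simp only [Dt]
      linear_combination hz
    have hu : IsUnit Q := (Matrix.isUnit_iff_isUnit_det Q).mpr (isUnit_iff_ne_zero.mpr hdetQ)
    refine ⟨hu.unit⁻¹, ?_⟩
    have hval : (((hu.unit⁻¹ : GL (Fin 2) Fq)⁻¹ : GL (Fin 2) Fq) :
        Matrix (Fin 2) (Fin 2) Fq) = Q := by
      rw [inv_inv]; exact hu.unit_spec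
    have hv1 : vec1 (hu.unit⁻¹) = vec1 g := by
      rw [vec1, hval, mulVec_expand]
      apply BorelAux.vec2_eq <;> simp [hQ]
    have hv2 : vec2 (hu.unit⁻¹) = vec1 h := by
      rw [vec2, hval, mulVec_expand]
      apply BorelAux.vec2_eq <;> simp [hQ]
    ext M
    rw [Set.mem_inter_iff, mem_conjB_iff, mem_conjB_iff, mem_conjT_iff, hv1, hv2]
    tauto
  · -- Part 3
    intro g h k hgh hgk hhk
    have Dgh := Dt_ne_of_Bne hgh
    ext M
    simp only [Set.mem_inter_iff, Set.mem_insert_iff, Set.mem_singleton_iff]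
    constructor
    · rintro ⟨⟨hBg, hBh⟩, hBk⟩
      obtain ⟨hdet, c, hcg⟩ := (mem_conjB_iff g M).mp hBg
      obtain ⟨-, d, hch⟩ := (mem_conjB_iff h M).mp hBh
      obtain ⟨-, e, hck⟩ := (mem_conjB_iff k M).mp hBk
      obtain ⟨α, β, hab⟩ := decomp Dgh (vec1 k)
      have hα : α ≠ 0 := by
        rintro rfl
        rw [zero_smul, zero_add] at hab
        exact hhk (conjB_eq_of_prop β hab)
      have hβ : β ≠ 0 := by
        rintro rfl
        rw [zero_smul, add_zero] at hab
        exact hgk (conjB_eq_of_prop α hab)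
      have h3 : α • (c • vec1 g) + β • (d • vec1 h) = e • (α • vec1 g + β • vec1 h) := by
        rw [← hcg, ← hch, ← Matrix.mulVec_smul, ← Matrix.mulVec_smul, ← Matrix.mulVec_add,
          ← hab, hck, hab]
      have hz : (α * (c - e)) • vec1 g + (β * (d - e)) • vec1 h = 0 := by
        funext i
        have h4 := congrFun h3 i
        simp only [Pi.add_apply, Pi.smul_apply, smul_eq_mul, Pi.zero_apply] at h4 ⊢
        linear_combination h4
      obtain ⟨hX, hY⟩ := indep_zero Dgh hz
      have hce : c = e := by
        rcases mul_eq_zero.mp hX with h' | h'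
        · exact absurd h' hα
        · exact sub_eq_zero.mp h'
      have hde : d = e := by
        rcases mul_eq_zero.mp hY with h' | h'
        · exact absurd h' hβ
        · exact sub_eq_zero.mp h'
      rw [hce] at hcg
      rw [hde] at hch
      have hM : M = !![e, 0; 0, e] := scalar_of_two_lines Dgh hcg hch
      have hdet2 : e * e = 1 := by
        rw [hM, Matrix.det_fin_two_of] at hdet
        linear_combination hdet
      rcases mul_self_eq_one_iff.mp hdet2 with h' | h'
      · left; rw [hM, h', ← Matrix.one_fin_two]
      · right
        rw [hM, h']
        ext i j
        fin_cases i <;> fin_cases j <;> simp [Matrix.one_apply, Matrix.neg_apply]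
    · rintro (rfl | rfl)
      · exact ⟨⟨one_mem_conjB g, one_mem_conjB h⟩, one_mem_conjB k⟩
      · exact ⟨⟨neg_one_mem_conjB g, neg_one_mem_conjB h⟩, neg_one_mem_conjB k⟩
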